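/- Let f0, f1, f2 be the automatic transformations of the Mealy automaton A₆, with products written so that (f g)(u) = f(g(u)). Then the following equalities of transformations of infinite binary words hold: f0 ∘ f0 is the identity transformation; f2 f1 = f1 f2 = f2² = f2; f1² = f1; and f2 f0 f1 f0 f2 = f1 f0 f1 f0 f2. -/
import Mathlib


/-- The sequence of states visited by a Mealy automaton with transition function `tr`,
started at state `q`, while reading the infinite word `u`. -/
def stateSeq {X Q : Type*} (tr : X → Q → Q) (q : Q) (u : ℕ → X) : ℕ → Q
  | 0 => q
  | k + 1 => tr (u k) (stateSeq tr q u k)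

/-- The automatic transformation of infinite words defined by the Mealy automaton with
transition function `tr` and output function `out` at the state `q`. -/
def autTrans {X Q : Type*} (tr : X → Q → Q) (out : X → Q → X) (q : Q) (u : ℕ → X) : ℕ → X :=
  fun n => out (u n) (stateSeq tr q u n)

/-- The transformation given by a word of states: the product (composition, applied from
right to left) of the corresponding automatic transformations. -/
def wordTrans {X Q : Type*} (tr : X → Q → Q) (out : X → Q → X) (w : List Q) :
    (ℕ → X) → (ℕ → X) :=
  (w.map (autTrans tr out)).foldr (· ∘ ·) id

/-- The growth function of a Mealy automaton: `growth tr out n` is the number of distinct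
transformations of infinite words obtained as compositions of exactly `n` automatic
transformations of the automaton. -/
noncomputable def growth {X Q : Type*} (tr : X → Q → Q) (out : X → Q → X) (n : ℕ) : ℕ :=
  Set.ncard { g : (ℕ → X) → (ℕ → X) | ∃ w : List Q, w.length = n ∧ wordTrans tr out w = g }

/-- The `i`-th finite difference of a function `γ`. -/
def fdiff (γ : ℕ → ℤ) : ℕ → ℕ → ℤ
  | 0, n => γ n
  | i + 1, n => fdiff γ i n - fdiff γ i (n - 1)

/-- Output function of the automaton `A₆`: at `q0` the output negates each letter; at `q1`
it is the identity; at `q2` it sends both letters to `x0`. -/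
def a6Out : Fin 2 → Fin 3 → Fin 2 := fun x q =>
  if q = 0 then (if x = 0 then 1 else 0)
  else if q = 1 then x else 0

/-- Transition function of the automaton `A₆`: both transitions from `q0` stay at `q0`;
from `q1` and `q2` the transition goes to `q1` on reading `x0` and to `q2` on reading
`x1`. -/
def a6Tr : Fin 2 → Fin 3 → Fin 3 := fun x q =>
  if q = 0 then 0 else (if x = 0 then 1 else 2)

/-- The Fibonacci sequence `Φ` with `Φ₀ = Φ₁ = 1` and `Φ_n = Φ_{n−1} + Φ_{n−2}`. -/
def Phi : ℕ → ℕ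
  | 0 => 1
  | 1 => 1
  | n + 2 => Phi (n + 1) + Phi n

/-- The automatic transformations `f0, f1, f2` of the automaton `A₆` at states
`q0, q1, q2`. -/
def a6F (q : Fin 3) : (ℕ → Fin 2) → (ℕ → Fin 2) := autTrans a6Tr a6Out q

lemma state0 (u : ℕ → Fin 2) (n : ℕ) : stateSeq a6Tr 0 u n = 0 := by
  induction n with
  | zero => rfl
  | succ n ih => simp [stateSeq, ih, a6Tr]

lemma state_ne_zero (q : Fin 3) (hq : q ≠ 0) (u : ℕ → Fin 2) (n : ℕ) :
    stateSeq a6Tr q u n ≠ 0 := by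
  induction n with
  | zero => exact hq
  | succ n ih =>
    simp only [stateSeq, a6Tr, if_neg ih]
    split <;> decide

lemma state_succ (q : Fin 3) (hq : q ≠ 0) (u : ℕ → Fin 2) (n : ℕ) :
    stateSeq a6Tr q u (n + 1) = if u n = 0 then 1 else 2 := by
  simp only [stateSeq, a6Tr, if_neg (state_ne_zero q hq u n)]

lemma f0_apply (u : ℕ → Fin 2) (n : ℕ) : a6F 0 u n = if u n = 0 then 1 else 0 := by
  simp [a6F, autTrans, state0, a6Out]

lemma f1_zero (u : ℕ → Fin 2) : a6F 1 u 0 = u 0 := by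
  simp [a6F, autTrans, stateSeq, a6Out]

lemma f2_zero (u : ℕ → Fin 2) : a6F 2 u 0 = 0 := by
  simp [a6F, autTrans, stateSeq, a6Out]

lemma fq_succ (q : Fin 3) (hq : q ≠ 0) (u : ℕ → Fin 2) (n : ℕ) :
    a6F q u (n + 1) = if u n = 0 then u (n + 1) else 0 := by
  simp only [a6F, autTrans, state_succ q hq u n]
  split <;> simp [a6Out]

lemma two_cases (x : Fin 2) : x = 0 ∨ x = 1 := by omega

lemma eq12_of (w : ℕ → Fin 2) (h : w 0 = 0) : a6F 1 w = a6F 2 w := by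
  funext n
  cases n with
  | zero => rw [f1_zero, f2_zero, h]
  | succ n => rw [fq_succ 1 (by decide), fq_succ 2 (by decide)]

lemma rel4 : a6F 2 ∘ a6F 2 = a6F 2 := by
  funext u n
  cases n with
  | zero => simp [Function.comp, f2_zero]
  | succ n =>
    simp only [Function.comp_apply]
    rw [fq_succ 2 (by decide), fq_succ 2 (by decide)]
    cases n with
    | zero =>
      rw [f2_zero]
      simp
    | succ m =>
      rw [fq_succ 2 (by decide)]
      rcases two_cases (u m) with h | h <;> rcases two_cases (u (m+1)) with h' | h' <;>
        simp [h, h']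

lemma rel2 : a6F 2 ∘ a6F 1 = a6F 2 := by
  funext u n
  cases n with
  | zero => simp [Function.comp, f2_zero]
  | succ n =>
    simp only [Function.comp_apply]
    rw [fq_succ 2 (by decide) (a6F 1 u) n, fq_succ 2 (by decide) u n,
      fq_succ 1 (by decide) u n]
    cases n with
    | zero =>
      rw [f1_zero]
      rcases two_cases (u 0) with h | h <;> simp [h]
    | succ m =>
      rw [fq_succ 1 (by decide)]
      rcases two_cases (u m) with h | h <;> rcases two_cases (u (m+1)) with h' | h' <;>
        simp [h, h']

/-- The defining relations of the semigroup `S_{A₆}` hold among the automatic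
transformations `f0, f1, f2` of `A₆` (products composed from right to left):
`f0² = 1`, `f2 f1 = f1 f2 = f2² = f2`, `f1² = f1` and
`f2 f0 f1 f0 f2 = f1 f0 f1 f0 f2`. -/
theorem relations_a6 :
    a6F 0 ∘ a6F 0 = id ∧
    a6F 2 ∘ a6F 1 = a6F 1 ∘ a6F 2 ∧
    a6F 1 ∘ a6F 2 = a6F 2 ∘ a6F 2 ∧
    a6F 2 ∘ a6F 2 = a6F 2 ∧
    a6F 1 ∘ a6F 1 = a6F 1 ∧
    a6F 2 ∘ a6F 0 ∘ a6F 1 ∘ a6F 0 ∘ a6F 2 = a6F 1 ∘ a6F 0 ∘ a6F 1 ∘ a6F 0 ∘ a6F 2 := by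
  have rel3 : a6F 1 ∘ a6F 2 = a6F 2 ∘ a6F 2 := by
    funext u n
    simp only [Function.comp_apply]
    exact congrFun (eq12_of (a6F 2 u) (f2_zero u)) n
  refine ⟨?_, ?_, rel3, rel4, ?_, ?_⟩
  · funext u n
    simp only [Function.comp_apply, f0_apply, id_eq]
    rcases two_cases (u n) with h | h <;> simp [h]
  · rw [rel2, rel3, rel4]
  · funext u n
    simp only [Function.comp_apply]
    cases n with
    | zero => rw [f1_zero]
    | succ n =>
      rw [fq_succ 1 (by decide), fq_succ 1 (by decide)]
      cases n with
      | zero =>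
        rw [f1_zero]
        rcases two_cases (u 0) with h | h <;> simp [h]
      | succ m =>
        rw [fq_succ 1 (by decide)]
        rcases two_cases (u m) with h | h <;> rcases two_cases (u (m+1)) with h' | h' <;>
          simp [h, h']
  · funext u
    simp only [Function.comp_apply]
    refine (eq12_of _ ?_).symm
    rw [f0_apply, f1_zero, f0_apply, f2_zero]
    simp
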